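/- Let H ⊆ E be an affine hyperplane with 0 ∉ H and let C ⊆ H be a convex set. Then the map F ↦ pos(F) is a bijection from the set of faces of C onto the set of nonempty faces of pos(C), with inverse given by G ↦ G ∩ C. -/

import Mathlib

open scoped Pointwise RealInnerProductSpace

variable {E : Type*} [NormedAddCommGroup E] [InnerProductSpace ℝ E] [FiniteDimensional ℝ E]

/-- `F` is a face of the convex set `C`: a convex subset of `C` such that whenever an open
segment between two points of `C` meets `F`, both endpoints belong to `F`. -/
def IsFace (C F : Set E) : Prop :=
  Convex ℝ F ∧ F ⊆ C ∧
    ∀ x ∈ C, ∀ y ∈ C, (openSegment ℝ x y ∩ F).Nonempty → x ∈ F ∧ y ∈ F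

/-- The exposed face `F⊥(C,u)` of `C` by the vector `u`: the points of `C` where `⟨u,·⟩`
attains its supremum over `C`. -/
def expFace (C : Set E) (u : E) : Set E :=
  {x ∈ C | ∀ y ∈ C, ⟪u, y⟫ ≤ ⟪u, x⟫}

/-- `F` is an exposed face of `C`: either `∅`, or `C`, or `F⊥(C,u)` for some nonzero `u`. -/
def IsExpFace (C F : Set E) : Prop :=
  F = ∅ ∨ F = C ∨ ∃ u : E, u ≠ 0 ∧ F = expFace C u

/-- The normal cone `N(C,x)` of `C` at the point `x`. -/
def normalCone (C : Set E) (x : E) : Set E :=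
  {u | ∀ y ∈ C, ⟪u, y - x⟫ ≤ 0}

/-- The normal cone `N(C,F)` of `C` at a subset `F`; for a nonempty convex `F ⊆ C` it agrees
with `normalCone C x` for any `x` in the relative interior of `F` (all these coincide), and
for `F = ∅` it is all of `E`. -/
def normalConeOf (C F : Set E) : Set E :=
  ⋂ x ∈ intrinsicInterior ℝ F, normalCone C x

/-- `N` is a normal cone of `C`: the normal cone of some face of `C`. -/
def IsNormalCone (C N : Set E) : Prop :=
  ∃ F, IsFace C F ∧ N = normalConeOf C F

/-- `T` is a touching cone of `C`: a nonempty face of a normal cone of `C`. -/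
def IsTouchingCone (C T : Set E) : Prop :=
  T.Nonempty ∧ ∃ N, IsNormalCone C N ∧ IsFace N T

/-- The positive hull of a set: all finite nonnegative combinations (`posHull ∅ = {0}`). -/
def posHull (S : Set E) : Set E :=
  {x | ∃ (k : ℕ) (c : Fin k → ℝ) (s : Fin k → E),
    (∀ i, 0 ≤ c i) ∧ (∀ i, s i ∈ S) ∧ x = ∑ i, c i • s i}

/-- A vector `u` is sharp normal for `C` if every `x ∈ ri(F⊥(C,u))` satisfies
`u ∈ ri(N(C,x))`. -/
def SharpNormal (C : Set E) (u : E) : Prop :=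
  ∀ x ∈ intrinsicInterior ℝ (expFace C u), u ∈ intrinsicInterior ℝ (normalCone C x)

/-- A point `x` is sharp exposed in `C` if every nonzero `u ∈ ri(N(C,x))` satisfies
`x ∈ ri(F⊥(C,u))`. -/
def SharpExposed (C : Set E) (x : E) : Prop :=
  ∀ u ∈ intrinsicInterior ℝ (normalCone C x), u ≠ 0 → x ∈ intrinsicInterior ℝ (expFace C u)

/-- The smallest exposed face of `C` containing `F`: the intersection of all exposed faces
of `C` containing `F`. -/
def supExp (C F : Set E) : Set E :=
  ⋂₀ {G | IsExpFace C G ∧ F ⊆ G}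

/-- The polar body of `K`. -/
def polarBody (K : Set E) : Set E := {u | ∀ y ∈ K, ⟪u, y⟫ ≤ 1}

set_option linter.unusedSectionVars false

lemma posHull_zero_mem (S : Set E) : (0 : E) ∈ posHull S :=
  ⟨0, Fin.elim0, Fin.elim0, fun i => i.elim0, fun i => i.elim0, by simp⟩

lemma smul_mem_posHull {S : Set E} {t : ℝ} (ht : 0 ≤ t) {x : E} (hx : x ∈ S) :
    t • x ∈ posHull S :=
  ⟨1, fun _ => t, fun _ => x, fun _ => ht, fun _ => hx, by simp⟩

lemma mem_posHull_of_mem {S : Set E} {x : E} (hx : x ∈ S) : x ∈ posHull S := by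
  simpa using smul_mem_posHull (t := 1) zero_le_one hx

lemma posHull_mono {S T : Set E} (h : S ⊆ T) : posHull S ⊆ posHull T := by
  rintro x ⟨k, c, s, hc, hs, rfl⟩
  exact ⟨k, c, s, hc, fun i => h (hs i), rfl⟩

lemma posHull_smul_mem {S : Set E} {t : ℝ} (ht : 0 ≤ t) {x : E} (hx : x ∈ posHull S) :
    t • x ∈ posHull S := by
  obtain ⟨k, c, s, hc, hs, rfl⟩ := hx
  refine ⟨k, fun i => t * c i, s, fun i => mul_nonneg ht (hc i), hs, ?_⟩
  rw [Finset.smul_sum]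
  simp [smul_smul]

lemma posHull_add_mem {S : Set E} {x y : E} (hx : x ∈ posHull S) (hy : y ∈ posHull S) :
    x + y ∈ posHull S := by
  obtain ⟨k, c, s, hc, hs, rfl⟩ := hx
  obtain ⟨l, d, r, hd, hr, rfl⟩ := hy
  refine ⟨k + l, Fin.append c d, Fin.append s r, ?_, ?_, ?_⟩
  · intro i
    refine Fin.addCases (fun j => ?_) (fun j => ?_) i <;> simp [hc, hd]
  · intro i
    refine Fin.addCases (fun j => ?_) (fun j => ?_) i <;> simp [hs, hr]
  · rw [Fin.sum_univ_add]
    simp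

lemma posHull_convex (S : Set E) : Convex ℝ (posHull S) := by
  intro x hx y hy a b ha hb _
  exact posHull_add_mem (posHull_smul_mem ha hx) (posHull_smul_mem hb hy)

lemma mem_posHull_iff {C : Set E} (hC : Convex ℝ C) {x : E} :
    x ∈ posHull C ↔ x = 0 ∨ ∃ t : ℝ, 0 < t ∧ ∃ a ∈ C, x = t • a := by
  constructor
  · rintro ⟨k, c, s, hc, hs, rfl⟩
    rcases eq_or_lt_of_le (Finset.sum_nonneg (fun i _ => hc i)) with h0 | hpos
    · left
      have hz : ∀ i ∈ Finset.univ, c i = 0 :=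
        (Finset.sum_eq_zero_iff_of_nonneg fun i _ => hc i).1 h0.symm
      refine Finset.sum_eq_zero fun i _ => by simp [hz i (Finset.mem_univ i)]
    · right
      set t := ∑ i, c i with ht
      refine ⟨t, hpos, ∑ i, (c i / t) • s i, ?_, ?_⟩
      · refine hC.sum_mem (fun i _ => div_nonneg (hc i) hpos.le) ?_ (fun i _ => hs i)
        rw [← Finset.sum_div, ← ht, div_self hpos.ne']
      · rw [Finset.smul_sum]
        refine Finset.sum_congr rfl fun i _ => ?_
        rw [smul_smul, mul_div_cancel₀ _ hpos.ne']
  · rintro (rfl | ⟨t, ht, a, ha, rfl⟩)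
    · exact posHull_zero_mem C
    · exact smul_mem_posHull ht.le ha

/-- For a convex set `C` contained in an affine hyperplane
`H = {x | ⟨w,x⟩ = c}` (with `w ≠ 0`, `c ≠ 0`, so `0 ∉ H`), the map `F ↦ pos(F)` is a
bijection from the faces of `C` onto the nonempty faces of `pos(C)`, with inverse
`G ↦ G ∩ C`. -/
theorem stmt_1 (w : E) (hw : w ≠ 0) (c : ℝ) (hc : c ≠ 0) (C : Set E) (hC : Convex ℝ C)
    (hCH : C ⊆ {x : E | ⟪w, x⟫ = c}) :
    (∀ F, IsFace C F → IsFace (posHull C) (posHull F) ∧ (posHull F).Nonempty) ∧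
    (∀ F, IsFace C F → posHull F ∩ C = F) ∧
    (∀ G, IsFace (posHull C) G → G.Nonempty →
      IsFace C (G ∩ C) ∧ posHull (G ∩ C) = G) := by
  -- the homogenization coordinate
  set h : E → ℝ := fun v => ⟪w, v⟫ / c with hh
  have hlin : ∀ (a b : ℝ) (x y : E), h (a • x + b • y) = a * h x + b * h y := by
    intro a b x y
    simp only [hh, inner_add_right, real_inner_smul_right]
    ring
  have hC1 : ∀ x ∈ C, h x = 1 := by
    intro x hx
    have h1 : ⟪w, x⟫ = c := hCH hx
    simp [hh, h1, div_self hc]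
  have h0 : h 0 = 0 := by simp [hh]
  -- representation of nonzero elements of posHull C
  have hrep : ∀ x ∈ posHull C, x ≠ 0 → ∃ t : ℝ, 0 < t ∧ ∃ a ∈ C, x = t • a ∧ h x = t := by
    intro x hx hx0
    rcases (mem_posHull_iff hC).1 hx with rfl | ⟨t, ht, a, ha, rfl⟩
    · exact absurd rfl hx0
    · refine ⟨t, ht, a, ha, rfl, ?_⟩
      have h1 : ⟪w, a⟫ = c := hCH ha
      simp [hh, real_inner_smul_right, h1, mul_div_assoc, div_self hc]
  have hnn : ∀ x ∈ posHull C, 0 ≤ h x := by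
    intro x hx
    by_cases hx0 : x = 0
    · simp [hx0, h0]
    · obtain ⟨t, ht, a, ha, rfl, hhx⟩ := hrep x hx hx0
      rw [hhx]; exact ht.le
  have hzero : ∀ x ∈ posHull C, h x = 0 → x = 0 := by
    intro x hx hhx
    by_contra hx0
    obtain ⟨t, ht, a, ha, rfl, hhx'⟩ := hrep x hx hx0
    rw [hhx'] at hhx
    exact ht.ne' hhx
  have h0C : (0 : E) ∉ C := fun h0' => hc (by simpa using (hCH h0').symm)
  refine ⟨?_, ?_, ?_⟩
  · -- Part 1
    rintro F ⟨hFconv, hFC, hFface⟩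
    refine ⟨⟨posHull_convex F, posHull_mono hFC, ?_⟩, 0, posHull_zero_mem F⟩
    rintro x hx y hy ⟨z, hzseg, hzF⟩
    obtain ⟨a, b, ha, hb, hab, hz⟩ := hzseg
    have hzC : z ∈ posHull C := posHull_mono hFC hzF
    have hhz : h z = a * h x + b * h y := by rw [← hz, hlin]
    by_cases hz0 : z = 0
    · -- then h x = h y = 0, so x = y = 0
      rw [hz0, h0] at hhz
      have hx0 : h x = 0 := by
        nlinarith [hnn x hx, hnn y hy, mul_nonneg hb.le (hnn y hy),
          mul_nonneg ha.le (hnn x hx)]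
      have hy0 : h y = 0 := by nlinarith [mul_nonneg ha.le (hnn x hx)]
      rw [hzero x hx hx0, hzero y hy hy0]
      exact ⟨posHull_zero_mem F, posHull_zero_mem F⟩
    · rcases (mem_posHull_iff hFconv).1 hzF with h' | ⟨r, hr, f, hfF, hzf⟩
      · exact absurd h' hz0
      have hfC : f ∈ C := hFC hfF
      have h1 : ⟪w, f⟫ = c := hCH hfC
      have hhzval : h z = r := by
        rw [hzf]
        simp [hh, real_inner_smul_right, h1, mul_div_assoc, div_self hc]
      by_cases hx0 : x = 0
      · -- y = (r/b) • f
        subst hx0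
        have : b • y = r • f := by rw [← hzf, ← hz]; simp
        have hy' : y = (r / b) • f := by
          calc y = b⁻¹ • (b • y) := by rw [smul_smul, inv_mul_cancel₀ hb.ne', one_smul]
            _ = (r / b) • f := by rw [this, smul_smul, div_eq_inv_mul]
        refine ⟨posHull_zero_mem F, ?_⟩
        rw [hy']
        exact smul_mem_posHull (div_nonneg hr.le hb.le) hfF
      · by_cases hy0 : y = 0
        · subst hy0
          have : a • x = r • f := by rw [← hzf, ← hz]; simp
          have hx' : x = (r / a) • f := by
            calc x = a⁻¹ • (a • x) := by rw [smul_smul, inv_mul_cancel₀ ha.ne', one_smul]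
              _ = (r / a) • f := by rw [this, smul_smul, div_eq_inv_mul]
          refine ⟨?_, posHull_zero_mem F⟩
          rw [hx']
          exact smul_mem_posHull (div_nonneg hr.le ha.le) hfF
        · obtain ⟨s, hs, p, hpC, hxp, hhx⟩ := hrep x hx hx0
          obtain ⟨t, ht, q, hqC, hyq, hhy⟩ := hrep y hy hy0
          have hrst : r = a * s + b * t := by
            rw [← hhzval, hhz, hhx, hhy]
          have hasbt : a * s > 0 := mul_pos ha hs
          have hbt : b * t > 0 := mul_pos hb ht
          have hfseg : f = ((a * s) / r) • p + ((b * t) / r) • q := by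
            have hrne : r ≠ 0 := hr.ne'
            have : r • f = (a * s) • p + (b * t) • q := by
              rw [← hzf, ← hz, hxp, hyq, smul_smul, smul_smul]
            calc f = r⁻¹ • (r • f) := by rw [smul_smul, inv_mul_cancel₀ hrne, one_smul]
              _ = ((a * s) / r) • p + ((b * t) / r) • q := by
                  rw [this, smul_add, smul_smul, smul_smul]
                  congr 1 <;> ring_nf
          have hpF : p ∈ F ∧ q ∈ F := by
            refine hFface p hpC q hqC ⟨f, ?_, hfF⟩
            refine ⟨(a * s) / r, (b * t) / r, div_pos hasbt hr, div_pos hbt hr, ?_, hfseg.symm⟩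
            field_simp [hrst]
            linarith
          constructor
          · rw [hxp]; exact smul_mem_posHull hs.le hpF.1
          · rw [hyq]; exact smul_mem_posHull ht.le hpF.2
  · -- Part 2
    rintro F ⟨hFconv, hFC, hFface⟩
    apply Set.Subset.antisymm
    · rintro x ⟨hxP, hxC⟩
      have hx0 : x ≠ 0 := fun h' => h0C (h' ▸ hxC)
      rcases (mem_posHull_iff hFconv).1 hxP with h' | ⟨t, ht, f, hfF, rfl⟩
      · exact absurd h' hx0
      · have h1 : h (t • f) = 1 := hC1 _ hxC
        have h2 : h (t • f) = t := by
          have h1 : ⟪w, f⟫ = c := hCH (hFC hfF)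
          simp [hh, real_inner_smul_right, h1, mul_div_assoc, div_self hc]
        rw [h2] at h1
        rw [h1, one_smul]
        exact hfF
    · intro f hf
      exact ⟨mem_posHull_of_mem hf, hFC hf⟩
  · -- Part 3
    rintro G ⟨hGconv, hGsub, hGface⟩ ⟨z₀, hz₀⟩
    -- 0 ∈ G
    have hG0 : (0 : E) ∈ G := by
      by_cases h' : z₀ = 0
      · exact h' ▸ hz₀
      · have h2z : (2 : ℝ) • z₀ ∈ posHull C := posHull_smul_mem (by norm_num) (hGsub hz₀)
        refine (hGface 0 (posHull_zero_mem C) ((2:ℝ) • z₀) h2z ⟨z₀, ?_, hz₀⟩).1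
        exact ⟨1/2, 1/2, by norm_num, by norm_num, by norm_num, by
          rw [smul_smul]; norm_num⟩
    -- G is a cone
    have hGcone : ∀ t : ℝ, 0 < t → ∀ z ∈ G, t • z ∈ G := by
      intro t ht z hz
      by_cases hz0 : z = 0
      · simpa [hz0] using hG0
      · rcases le_or_gt t 1 with ht1 | ht1
        · have : t • z + (1 - t) • (0 : E) ∈ G :=
            hGconv hz hG0 ht.le (by linarith) (by ring)
          simpa using this
        · have htz : t • z ∈ posHull C := posHull_smul_mem ht.le (hGsub hz)
          refine (hGface 0 (posHull_zero_mem C) (t • z) htz ⟨z, ?_, hz⟩).2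
          refine ⟨1 - 1/t, 1/t, by
              have : 1/t < 1 := by rw [div_lt_one (by linarith)]; linarith
              linarith,
            by positivity, by ring, ?_⟩
          rw [smul_smul]
          field_simp
          simp
    constructor
    · refine ⟨hGconv.inter hC, Set.inter_subset_right, ?_⟩
      rintro p hp q hq ⟨z, hzseg, hzG, hzC⟩
      have := hGface p (mem_posHull_of_mem hp) q (mem_posHull_of_mem hq) ⟨z, hzseg, hzG⟩
      exact ⟨⟨this.1, hp⟩, ⟨this.2, hq⟩⟩
    · apply Set.Subset.antisymm
      · intro x hx
        rcases (mem_posHull_iff (hGconv.inter hC)).1 hx with rfl | ⟨t, ht, f, hfGC, rfl⟩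
        · exact hG0
        · exact hGcone t ht f hfGC.1
      · intro z hzG
        by_cases hz0 : z = 0
        · exact hz0 ▸ posHull_zero_mem _
        · rcases (mem_posHull_iff hC).1 (hGsub hzG) with h' | ⟨t, ht, a, haC, rfl⟩
          · exact absurd h' hz0
          · have haG : a ∈ G := by
              have := hGcone t⁻¹ (by positivity) _ hzG
              rwa [smul_smul, inv_mul_cancel₀ ht.ne', one_smul] at this
            exact smul_mem_posHull ht.le ⟨haG, haC⟩
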